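/- Let A = ⊕_{α=1}^r A_α be a direct sum of truncated polynomial algebras A_α = K[ξ]/(ξ^{m_α}), with unit e = Σ_α e_α, and let X = Σ_α X_α with X_α = Σ_i x_i^{(α)} ξ^{i−1} ∈ A_α. Then e is a cyclic vector for multiplication by X on A if and only if: (i) for each α with m_α ≥ 2, x_2^{(α)} ≠ 0, and (ii) x_1^{(α)} ≠ x_1^{(β)} for all α ≠ β. -/

import Mathlib

open Polynomial

namespace Stmt9aux
variable {K : Type*} [Field K]

/-- abbreviation for the truncated polynomial algebra -/
local notation "Am" m => AdjoinRoot (Polynomial.X ^ m : Polynomial K)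

lemma root_pow_self (m : ℕ) : (AdjoinRoot.root (X ^ m : K[X])) ^ m = 0 := by
  rw [show AdjoinRoot.root (X ^ m : K[X]) = AdjoinRoot.mk _ X from rfl, ← map_pow,
    AdjoinRoot.mk_self]

lemma root_pow_eq_zero {m j : ℕ} (h : m ≤ j) :
    (AdjoinRoot.root (X ^ m : K[X])) ^ j = 0 := by
  obtain ⟨k, rfl⟩ := Nat.exists_eq_add_of_le h
  rw [pow_add, root_pow_self, zero_mul]

noncomputable def bas (m : ℕ) : Module.Basis (Fin m) K (Am m) :=
  ((AdjoinRoot.powerBasis (f := (X ^ m : K[X])) (pow_ne_zero m X_ne_zero)).basis).reindex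
    (finCongr (by simp [AdjoinRoot.powerBasis]))

lemma bas_apply (m : ℕ) (i : Fin m) :
    bas (K := K) m i = (AdjoinRoot.root (X ^ m : K[X])) ^ (i : ℕ) := by
  rw [bas, Module.Basis.reindex_apply, PowerBasis.basis_eq_pow]
  simp

lemma root_pow_ne_zero {m : ℕ} (h : 1 ≤ m) :
    (AdjoinRoot.root (X ^ m : K[X])) ^ (m - 1) ≠ 0 := by
  have := (bas (K := K) m).ne_zero ⟨m - 1, by omega⟩
  rwa [bas_apply] at this


/-- If `s(ξu) = 0` with `u` a unit and `deg s < m`, then `s = 0`. -/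
lemma eq_zero_of_aeval_root_mul_unit {m : ℕ} {u : AdjoinRoot (X ^ m : K[X])}
    (hu : IsUnit u) {s : K[X]} (hdeg : s.natDegree < m)
    (hs : aeval (AdjoinRoot.root (X ^ m : K[X]) * u) s = 0) : s = 0 := by
  by_contra hne
  set ξ := AdjoinRoot.root (X ^ m : K[X]) with hξ
  set k := s.natTrailingDegree with hk
  have hkd : k ≤ s.natDegree := natTrailingDegree_le_natDegree s
  have hck : s.coeff k ≠ 0 := by
    rw [hk]
    exact trailingCoeff_nonzero_iff_nonzero.2 hne
  have key : (0 : AdjoinRoot (X ^ m : K[X])) = s.coeff k • (ξ ^ (m - 1) * u ^ k) := by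
    have h0 : ξ ^ (m - 1 - k) * aeval (ξ * u) s = 0 := by rw [hs, mul_zero]
    rw [aeval_eq_sum_range, Finset.mul_sum] at h0
    rw [← h0]
    rw [Finset.sum_eq_single k]
    · rw [mul_smul_comm, mul_pow, ← mul_assoc, ← pow_add,
        show m - 1 - k + k = m - 1 from by omega]
    · intro i hi hik
      rcases lt_or_gt_of_ne hik with h | h
      · rw [coeff_eq_zero_of_lt_natTrailingDegree h, zero_smul, mul_zero]
      · rw [mul_smul_comm, mul_pow, ← mul_assoc, ← pow_add,
          root_pow_eq_zero (by omega), zero_mul, smul_zero]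
    · intro hk'
      exact absurd (Finset.mem_range.2 (by omega)) hk'
  have : s.coeff k • (ξ ^ (m - 1) : AdjoinRoot (X ^ m : K[X])) = 0 := by
    have hup : IsUnit (u ^ k) := hu.pow k
    obtain ⟨v, hv⟩ := hup.exists_right_inv
    have := congrArg (· * v) key
    simpa [mul_assoc, smul_mul_assoc, hv] using this.symm
  rcases smul_eq_zero.1 this with h | h
  · exact hck h
  · exact root_pow_ne_zero (by omega) h


/-- If `p(c + ξu) = 0` with `u` a unit, then `(X - C c)^m ∣ p`. -/
lemma pow_dvd_of_aeval_eq_zero {m : ℕ} (hm : 1 ≤ m) {u : AdjoinRoot (X ^ m : K[X])}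
    (hu : IsUnit u) {c : K} {p : K[X]}
    (hp : aeval (c • 1 + AdjoinRoot.root (X ^ m : K[X]) * u) p = 0) :
    (X - C c) ^ m ∣ p := by
  set ξ := AdjoinRoot.root (X ^ m : K[X]) with hξ
  set z : AdjoinRoot (X ^ m : K[X]) := c • 1 + ξ * u with hz
  have hmonic : ((X - C c) ^ m : K[X]).Monic := (monic_X_sub_C c).pow m
  have hzd : aeval z ((X - C c) ^ m) = 0 := by
    have : aeval z (X - C c) = ξ * u := by
      simp [hz, ← AdjoinRoot.algebraMap_eq, Algebra.algebraMap_eq_smul_one]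
    rw [map_pow, this, mul_pow, root_pow_self, zero_mul]
  set r := p %ₘ ((X - C c) ^ m) with hr
  have hre : aeval z r = 0 := by
    have := modByMonic_add_div p ((X - C c) ^ m)
    have h2 := congrArg (aeval z) this
    rw [map_add, map_mul, hzd, zero_mul, add_zero] at h2
    rw [← h2] at hp
    exact hp
  have hrdeg : r.natDegree < m := by
    have h1 : ((X - C c) ^ m : K[X]).natDegree = m := by
      rw [natDegree_pow, natDegree_X_sub_C, mul_one]
    have := natDegree_modByMonic_lt p hmonic (fun h => by
      have := congrArg natDegree h
      rw [h1, natDegree_one] at this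
      omega)
    rw [← hr, h1] at this
    exact this
  set s := r.comp (X + C c) with hs
  have hsa : aeval (ξ * u) s = 0 := by
    have h3 : (aeval (ξ * u) (X + C c) : AdjoinRoot (X ^ m : K[X])) = z := by
      simp [hz, ← AdjoinRoot.algebraMap_eq, Algebra.algebraMap_eq_smul_one, add_comm]
    rw [hs, aeval_comp, h3]
    exact hre
  have hsd : s.natDegree < m := by
    rw [hs, natDegree_comp, natDegree_X_add_C, mul_one]
    exact hrdeg
  have hs0 : s = 0 := eq_zero_of_aeval_root_mul_unit hu hsd hsa
  have hr0 : r = 0 := by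
    have : r = s.comp (X - C c) := by
      rw [hs, comp_assoc]
      simp
    rw [this, hs0, zero_comp]
  exact (modByMonic_eq_zero_iff_dvd hmonic).1 hr0


/-- Splitting off the constant term of a polynomial expression. -/
lemma geom_split {A : Type*} [CommRing A] [Algebra K A] (t : A) {k : ℕ} (hk : 1 ≤ k)
    (z : Fin k → K) :
    ∑ j : Fin k, z j • t ^ (j : ℕ)
      = z ⟨0, hk⟩ • 1 + t * ∑ j : Fin (k - 1), z ⟨j + 1, by omega⟩ • t ^ (j : ℕ) := by
  obtain ⟨k', rfl⟩ : ∃ k', k = k' + 1 := ⟨k - 1, by omega⟩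
  rw [Fin.sum_univ_succ, Finset.mul_sum]
  simp only [Fin.val_zero, pow_zero, Fin.val_succ]
  congr 1
  apply Finset.sum_congr rfl
  intro j _
  rw [pow_succ', mul_smul_comm]
  rfl

/-- unit decomposition for the reverse direction -/
lemma exists_unit_decomp {m : ℕ} (hm : 1 ≤ m) (y : Fin m → K)
    (hy : ∀ h : 2 ≤ m, y ⟨1, h⟩ ≠ 0) :
    ∃ u : AdjoinRoot (X ^ m : K[X]), IsUnit u ∧
      ∑ j : Fin m, y j • (AdjoinRoot.root (X ^ m : K[X])) ^ (j : ℕ)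
        = y ⟨0, hm⟩ • 1 + AdjoinRoot.root (X ^ m : K[X]) * u := by
  set ξ := AdjoinRoot.root (X ^ m : K[X]) with hξ
  rcases eq_or_lt_of_le hm with h1 | h2
  · -- m = 1
    refine ⟨1, isUnit_one, ?_⟩
    rw [geom_split ξ hm]
    congr 1
    have hz : ξ = 0 := by
      have h : ξ ^ 1 = ξ ^ m := congrArg (ξ ^ ·) h1
      rw [pow_one] at h
      rw [h]
      exact root_pow_self m
    rw [hz, zero_mul, zero_mul]
  · -- 2 ≤ m
    have h2' : 2 ≤ m := h2
    set w := ∑ j : Fin (m - 1), y ⟨j + 1, by omega⟩ • ξ ^ (j : ℕ) with hw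
    refine ⟨w, ?_, geom_split ξ hm y⟩
    have hm1 : 1 ≤ m - 1 := by omega
    rw [hw, geom_split ξ hm1]
    have hnil : IsNilpotent (ξ * ∑ j : Fin (m - 1 - 1),
        y ⟨(j : ℕ) + 1 + 1, by omega⟩ • ξ ^ (j : ℕ)) := by
      refine ⟨m, ?_⟩
      rw [mul_pow, root_pow_self, zero_mul]
    have hunit : IsUnit ((y ⟨1, h2'⟩ • 1 : AdjoinRoot (X ^ m : K[X]))) := by
      rw [← Algebra.algebraMap_eq_smul_one]
      exact (isUnit_iff_ne_zero.2 (hy h2')).map (algebraMap K _)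
    exact hnil.isUnit_add_left_of_commute hunit (Commute.all _ _)

/-- Evaluation at zero. -/
noncomputable def ev0 {m : ℕ} (hm : 1 ≤ m) : AdjoinRoot (X ^ m : K[X]) →ₐ[K] K :=
  AdjoinRoot.liftAlgHom _ (Algebra.ofId K K) 0 (by rw [eval₂_pow, eval₂_X, zero_pow (by omega)])

lemma ev0_root {m : ℕ} (hm : 1 ≤ m) : ev0 (K := K) hm (AdjoinRoot.root (X ^ m : K[X])) = 0 := by
  apply AdjoinRoot.liftAlgHom_root

lemma ev0_apply {m : ℕ} (hm : 1 ≤ m) (y : Fin m → K) :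
    ev0 (K := K) hm (∑ j : Fin m, y j • (AdjoinRoot.root (X ^ m : K[X])) ^ (j : ℕ))
      = y ⟨0, hm⟩ := by
  rw [map_sum]
  rw [Finset.sum_eq_single ⟨0, hm⟩]
  · simp
  · intro j _ hj
    have hj0 : (j : ℕ) ≠ 0 := by
      simpa [Fin.ext_iff] using hj
    rw [map_smul, map_pow, ev0_root, zero_pow hj0, smul_zero]
  · simp

/-- The `ξ¹`-coordinate functional kills `ξ²·(anything)`. -/
lemma coord_one_sq_mul {m : ℕ} (hm : 2 ≤ m) (t : AdjoinRoot (X ^ m : K[X])) :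
    (bas (K := K) m).coord ⟨1, hm⟩ ((AdjoinRoot.root (X ^ m : K[X])) ^ 2 * t) = 0 := by
  set ξ := AdjoinRoot.root (X ^ m : K[X]) with hξ
  set φ := (bas (K := K) m).coord ⟨1, hm⟩ with hφ
  have : φ ∘ₗ LinearMap.mulLeft K (ξ ^ 2) = 0 := by
    apply (bas (K := K) m).ext
    intro j
    simp only [LinearMap.comp_apply, LinearMap.mulLeft_apply, LinearMap.zero_apply]
    rw [bas_apply, ← pow_add]
    by_cases hj : 2 + (j : ℕ) < m
    · rw [← bas_apply m ⟨2 + j, hj⟩, hφ, Module.Basis.coord_apply, Module.Basis.repr_self,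
        Finsupp.single_apply]
      simp [Fin.ext_iff]
      omega
    · rw [root_pow_eq_zero (by omega), map_zero]
  have h2 := congrArg (· t) (congrArg DFunLike.coe this)
  simpa using h2

lemma coord_one_one {m : ℕ} (hm : 2 ≤ m) :
    (bas (K := K) m).coord ⟨1, hm⟩ 1 = 0 := by
  have h1 : (1 : AdjoinRoot (X ^ m : K[X])) = bas (K := K) m ⟨0, by omega⟩ := by
    rw [bas_apply]; simp
  rw [h1, Module.Basis.coord_apply, Module.Basis.repr_self, Finsupp.single_apply]
  simp [Fin.ext_iff]

/-- If `x₁ = 0`, all powers of `z = Σ y_j ξ^j` have vanishing `ξ¹`-coordinate. -/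
lemma coord_pow_eq_zero {m : ℕ} (hm : 2 ≤ m) (y : Fin m → K)
    (hy : y ⟨1, hm⟩ = 0) (i : ℕ) :
    (bas (K := K) m).coord ⟨1, hm⟩
      ((∑ j : Fin m, y j • (AdjoinRoot.root (X ^ m : K[X])) ^ (j : ℕ)) ^ i) = 0 := by
  set ξ := AdjoinRoot.root (X ^ m : K[X]) with hξ
  set z := ∑ j : Fin m, y j • ξ ^ (j : ℕ) with hz
  have hm1 : 1 ≤ m := by omega
  -- z = y₀ • 1 + ξ² * v
  obtain ⟨v, hv⟩ : ∃ v, z = y ⟨0, hm1⟩ • 1 + ξ ^ 2 * v := by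
    refine ⟨∑ j : Fin (m - 1 - 1), y ⟨(j : ℕ) + 1 + 1, by omega⟩ • ξ ^ (j : ℕ), ?_⟩
    rw [hz, geom_split ξ hm1, geom_split ξ (show 1 ≤ m - 1 by omega)]
    have : y ⟨1, hm⟩ • (1 : AdjoinRoot (X ^ m : K[X])) = 0 := by rw [hy, zero_smul]
    rw [show (⟨(0 : ℕ) + 1, by omega⟩ : Fin m) = ⟨1, hm⟩ from rfl] at *
    rw [this, zero_add, ← mul_assoc, ← pow_two]
  -- z^i - (y₀•1)^i ∈ (ξ²)
  have hmem : z ^ i - (y ⟨0, hm1⟩ • 1) ^ i ∈ Ideal.span {ξ ^ 2} := by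
    have h1 : Ideal.Quotient.mk (Ideal.span {ξ ^ 2}) z
        = Ideal.Quotient.mk (Ideal.span {ξ ^ 2}) (y ⟨0, hm1⟩ • 1) := by
      rw [Ideal.Quotient.eq, hv]
      simp only [add_sub_cancel_left]
      exact Ideal.mem_span_singleton.2 (dvd_mul_right _ _)
    rw [← Ideal.Quotient.eq, map_pow, map_pow, h1]
  obtain ⟨t, ht⟩ := Ideal.mem_span_singleton.1 hmem
  have hzi : z ^ i = (y ⟨0, hm1⟩) ^ i • 1 + ξ ^ 2 * t := by
    rw [sub_eq_iff_eq_add] at ht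
    rw [ht, _root_.smul_pow, one_pow, add_comm]
  rw [hzi, map_add, map_smul, coord_one_one hm, coord_one_sq_mul hm, smul_zero, add_zero]



end Stmt9aux

open Stmt9aux

/-- For a direct sum `A = ⊕_α K[ξ]/(ξ^{m_α})` of truncated polynomial algebras and
`X = (X_α)_α` with `X_α = ∑_i x_i^{(α)} ξ^{i-1}`, the unit `e = 1` is a cyclic vector
for multiplication by `X` (the powers `X^0, …, X^{n-1}`, `n = ∑ m_α`, span `A`) iff
`x₂^{(α)} ≠ 0` for every block with `m_α ≥ 2`, and `x₁^{(α)} ≠ x₁^{(β)}` for `α ≠ β`. -/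
theorem stmt9 {K : Type*} [Field K] {r : ℕ} (m : Fin r → ℕ) (hm : ∀ α, 1 ≤ m α)
    (x : (α : Fin r) → Fin (m α) → K)
    (X : (α : Fin r) → AdjoinRoot (Polynomial.X ^ (m α) : Polynomial K))
    (hX : ∀ α, X α = ∑ j : Fin (m α),
        x α j • (AdjoinRoot.root (Polynomial.X ^ (m α) : Polynomial K)) ^ (j : ℕ)) :
    Submodule.span K (Set.range fun i : Fin (∑ α, m α) => X ^ (i : ℕ)) = ⊤
      ↔ ((∀ α, ∀ _ : 2 ≤ m α, x α ⟨1, by omega⟩ ≠ 0) ∧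
          ∀ α β, α ≠ β → x α ⟨0, hm α⟩ ≠ x β ⟨0, hm β⟩) := by
  classical
  constructor
  · intro hspan
    have key : ∀ (Φ : ((α : Fin r) → AdjoinRoot (Polynomial.X ^ (m α) : Polynomial K)) →ₗ[K] K),
        (∀ i : Fin (∑ α, m α), Φ (X ^ (i : ℕ)) = 0) → Φ = 0 := by
      intro Φ h
      have hle : Submodule.span K (Set.range fun i : Fin (∑ α, m α) => X ^ (i : ℕ))
          ≤ LinearMap.ker Φ := by
        rw [Submodule.span_le]
        rintro _ ⟨i, rfl⟩
        exact h i
      rw [hspan, top_le_iff, LinearMap.ker_eq_top] at hle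
      exact hle
    constructor
    · intro α h2 hx1
      set φ : ((α : Fin r) → AdjoinRoot (Polynomial.X ^ (m α) : Polynomial K)) →ₗ[K] K :=
        (bas (m α)).coord ⟨1, h2⟩ ∘ₗ LinearMap.proj α with hφ
      have h0 : ∀ i : Fin (∑ α, m α), φ (X ^ (i : ℕ)) = 0 := by
        intro i
        simp only [hφ, LinearMap.comp_apply, LinearMap.proj_apply, Pi.pow_apply]
        rw [hX α]
        exact coord_pow_eq_zero h2 (x α) hx1 (i : ℕ)
      have hz := key φ h0
      have hval : φ (Pi.single α (AdjoinRoot.root (Polynomial.X ^ (m α) : Polynomial K))) = 1 := by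
        simp only [hφ, LinearMap.comp_apply, LinearMap.proj_apply, Pi.single_eq_same]
        have : AdjoinRoot.root (Polynomial.X ^ (m α) : Polynomial K) = bas (m α) ⟨1, h2⟩ := by
          rw [bas_apply, pow_one]
        rw [this, Module.Basis.coord_apply, Module.Basis.repr_self, Finsupp.single_apply]
        simp
      rw [hz] at hval
      simp at hval
    · intro α β hne hcc
      set φ : ((α : Fin r) → AdjoinRoot (Polynomial.X ^ (m α) : Polynomial K)) →ₗ[K] K :=
        ((ev0 (hm α)).toLinearMap ∘ₗ LinearMap.proj α)
          - ((ev0 (hm β)).toLinearMap ∘ₗ LinearMap.proj β) with hφ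
      have h0 : ∀ i : Fin (∑ α, m α), φ (X ^ (i : ℕ)) = 0 := by
        intro i
        simp only [hφ, LinearMap.sub_apply, LinearMap.comp_apply, LinearMap.proj_apply,
          Pi.pow_apply, AlgHom.toLinearMap_apply, map_pow]
        rw [hX α, hX β, ev0_apply, ev0_apply, hcc, sub_self]
      have hz := key φ h0
      have hval : φ (Pi.single α 1) = 1 := by
        simp only [hφ, LinearMap.sub_apply, LinearMap.comp_apply, LinearMap.proj_apply,
          AlgHom.toLinearMap_apply, Pi.single_eq_same]
        rw [Pi.single_eq_of_ne (Ne.symm hne), map_one, map_zero, sub_zero]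
      rw [hz] at hval
      simp at hval
  · rintro ⟨h1, h2⟩
    have hinj : Function.Injective (fun α => x α ⟨0, hm α⟩) := by
      intro a b hab
      by_contra hab'
      exact h2 a b hab' hab
    haveI : ∀ α, Module.Finite K (AdjoinRoot (Polynomial.X ^ (m α) : Polynomial K)) :=
      fun α => Module.Finite.of_basis (bas (m α))
    have hfr : Module.finrank K ((α : Fin r) → AdjoinRoot (Polynomial.X ^ (m α) : Polynomial K))
        = ∑ α, m α := by
      rw [Module.finrank_pi_fintype]
      exact Finset.sum_congr rfl fun α _ => by
        rw [Module.finrank_eq_card_basis (bas (m α)), Fintype.card_fin]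
    have hli : LinearIndependent K (fun i : Fin (∑ α, m α) => X ^ (i : ℕ)) := by
      rw [Fintype.linearIndependent_iff]
      intro g hg i
      set p : Polynomial K := ∑ i : Fin (∑ α, m α), Polynomial.C (g i) * Polynomial.X ^ (i : ℕ)
        with hp
      have hpz : Polynomial.aeval X p = 0 := by
        rw [hp, map_sum]
        rw [← hg]
        apply Finset.sum_congr rfl
        intro j _
        rw [map_mul, Polynomial.aeval_C, map_pow, Polynomial.aeval_X, Algebra.smul_def]
      have hcomp : ∀ α, Polynomial.aeval (X α) p = 0 := by
        intro α
        have := Polynomial.aeval_algHom_apply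
          (Pi.evalAlgHom K (fun α => AdjoinRoot (Polynomial.X ^ (m α) : Polynomial K)) α) X p
        rw [hpz, map_zero] at this
        simpa using this
      have hdvd : ∀ α, (Polynomial.X - Polynomial.C (x α ⟨0, hm α⟩)) ^ (m α) ∣ p := by
        intro α
        obtain ⟨u, hu, hdec⟩ := exists_unit_decomp (hm α) (x α) (h1 α)
        apply pow_dvd_of_aeval_eq_zero (hm α) hu
        rw [← hdec, ← hX α]
        exact hcomp α
      have hprod : (∏ α, (Polynomial.X - Polynomial.C (x α ⟨0, hm α⟩)) ^ (m α)) ∣ p := by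
        apply Finset.prod_dvd_of_coprime
        · exact Pairwise.set_pairwise
            (fun a b hab => ((Polynomial.pairwise_coprime_X_sub_C hinj) hab).pow) _
        · exact fun α _ => hdvd α
      have hgm : (∏ α, (Polynomial.X - Polynomial.C (x α ⟨0, hm α⟩)) ^ (m α)).natDegree
          = ∑ α, m α := by
        rw [Polynomial.natDegree_prod _ _ (fun α _ =>
          pow_ne_zero _ (Polynomial.X_sub_C_ne_zero _))]
        apply Finset.sum_congr rfl
        intro α _
        rw [Polynomial.natDegree_pow, Polynomial.natDegree_X_sub_C, mul_one]
      have hp0 : p = 0 := by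
        by_cases hn : (∑ α, m α) = 0
        · rw [hp]
          apply Finset.sum_eq_zero
          intro j _
          exact absurd (j.2.trans_le hn.le) (Nat.not_lt_zero _)
        · apply Polynomial.eq_zero_of_dvd_of_natDegree_lt hprod
          rw [hgm]
          have : p.natDegree ≤ (∑ α, m α) - 1 := by
            rw [hp]
            apply Polynomial.natDegree_sum_le_of_forall_le
            intro j _
            apply (Polynomial.natDegree_C_mul_le _ _).trans
            rw [Polynomial.natDegree_X_pow]
            omega
          omega
      have hco : p.coeff (i : ℕ) = g i := by
        rw [hp, Polynomial.finset_sum_coeff]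
        rw [Finset.sum_eq_single i]
        · rw [Polynomial.coeff_C_mul, Polynomial.coeff_X_pow, if_pos rfl, mul_one]
        · intro j _ hji
          rw [Polynomial.coeff_C_mul, Polynomial.coeff_X_pow, if_neg, mul_zero]
          simpa [Fin.ext_iff, eq_comm] using hji
        · simp
      rw [hp0, Polynomial.coeff_zero] at hco
      exact hco.symm
    haveI : FiniteDimensional K ((α : Fin r) → AdjoinRoot (Polynomial.X ^ (m α) : Polynomial K)) :=
      Module.Finite.pi
    exact hli.span_eq_top_of_card_eq_finrank' (by rw [Fintype.card_fin, hfr])
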